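/- arXiv:2604.13524 — 2 statements merged into one kernel-verified Lean document; each statement's English description precedes it below -/
import Mathlib

section
/- Let ε ∈ (0,1), let ρ be a density matrix on ℂ^d, and let X be a Hermitian d×d complex matrix with trace 1. Then the infimum of tr[EX] over all tests E (Hermitian with 0 ≤ E ≤ I) satisfying tr[(I−E)ρ] ≤ ε equals 1 − ε if and only if ρ = X. -/
open Matrix ComplexOrder

/-- Trace norm of a complex matrix: the trace of `sqrt(AᴴA)` (sum of singular values). -/
noncomputable def traceNorm {n : Type*} [Fintype n] [DecidableEq n]
    (A : Matrix n n ℂ) : ℝ :=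
  (((Matrix.posSemidef_conjTranspose_mul_self A).1.eigenvectorUnitary.1 *
      Matrix.diagonal (((↑) : ℝ → ℂ) ∘ Real.sqrt ∘
        (Matrix.posSemidef_conjTranspose_mul_self A).1.eigenvalues) *
      (star (Matrix.posSemidef_conjTranspose_mul_self A).1.eigenvectorUnitary :
        Matrix n n ℂ)).trace).re

/-- Trace distance `T(X,Y) = ‖X - Y‖₁ / 2`. -/
noncomputable def traceDist {n : Type*} [Fintype n] [DecidableEq n]
    (X Y : Matrix n n ℂ) : ℝ :=
  traceNorm (X - Y) / 2

/-- A density matrix: positive semidefinite with unit trace. -/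
def IsDensityMatrix {n : Type*} [Fintype n] (ρ : Matrix n n ℂ) : Prop :=
  ρ.PosSemidef ∧ ρ.trace = 1

/-- The battery Gibbs state `π_M = diag(1 - 1/M, 1/M)`. -/
noncomputable def piM (M : ℝ) : Matrix (Fin 2) (Fin 2) ℂ :=
  Matrix.diagonal ![((1 - 1/M : ℝ) : ℂ), ((1/M : ℝ) : ℂ)]

/-- The excited battery state `|1⟩⟨1| = diag(0,1)`. -/
def ket1 : Matrix (Fin 2) (Fin 2) ℂ :=
  Matrix.diagonal ![0, 1]

/-- A test (POVM effect): `0 ≤ E ≤ I`. -/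
def IsTest {n : Type*} [Fintype n] [DecidableEq n] (E : Matrix n n ℂ) : Prop :=
  E.PosSemidef ∧ (1 - E).PosSemidef

/-- Choi matrix `Σ_{ij} E_{ij} ⊗ F(E_{ij})` of a linear map on matrices. -/
noncomputable def choiMatrix {n m : Type*} [Fintype n] [DecidableEq n] [Fintype m]
    (F : Matrix n n ℂ →ₗ[ℂ] Matrix m m ℂ) :
    Matrix (n × m) (n × m) ℂ :=
  fun p q => F (Matrix.single p.1 q.1 1) p.2 q.2

/-- Completely positive (positive semidefinite Choi matrix) and trace preserving. -/
def IsCPTP {n m : Type*} [Fintype n] [DecidableEq n] [Fintype m]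
    (F : Matrix n n ℂ →ₗ[ℂ] Matrix m m ℂ) : Prop :=
  (choiMatrix F).PosSemidef ∧ ∀ X, (F X).trace = X.trace

/-- `n`-fold Kronecker (tensor) power of a `2 × 2` matrix, indexed by bit strings. -/
def tensPow (A : Matrix (Fin 2) (Fin 2) ℂ) (n : ℕ) :
    Matrix (Fin n → Fin 2) (Fin n → Fin 2) ℂ :=
  fun x y => ∏ i, A (x i) (y i)

/-- `ε`-ball (in trace distance) of density matrices around a set `𝓟`. -/
noncomputable def metBall {n : Type*} [Fintype n] [DecidableEq n]
    (ε : ℝ) (P : Set (Matrix n n ℂ)) : Set (Matrix n n ℂ) :=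
  {ω | IsDensityMatrix ω ∧ ∃ ρ ∈ P, traceDist ω ρ ≤ ε}

section Aux

private lemma psd_diag_entry {d : ℕ} {M : Matrix (Fin d) (Fin d) ℂ} (hM : M.PosSemidef)
    (i : Fin d) : 0 ≤ M i i := by
  exact hM.diag_nonneg

private lemma trace_diagonal_mul {d : ℕ} (c : Fin d → ℂ) (M : Matrix (Fin d) (Fin d) ℂ) :
    (Matrix.diagonal c * M).trace = ∑ i, c i * M i i := by
  simp [Matrix.trace, Matrix.diag, Matrix.mul_apply, Matrix.diagonal]

private lemma trace_conj_mul {d : ℕ} (V N M : Matrix (Fin d) (Fin d) ℂ) :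
    (V * N * Vᴴ * M).trace = (N * (Vᴴ * M * V)).trace := by
  rw [show V * N * Vᴴ * M = V * (N * (Vᴴ * M)) by simp only [mul_assoc],
    Matrix.trace_mul_comm, show N * (Vᴴ * M) * V = N * (Vᴴ * M * V) by simp only [mul_assoc],
    Matrix.trace_mul_comm]

private lemma conj_diag_trace {d : ℕ} (V : Matrix (Fin d) (Fin d) ℂ) (c : Fin d → ℂ)
    (M : Matrix (Fin d) (Fin d) ℂ) :
    (V * Matrix.diagonal c * Vᴴ * M).trace = ∑ i, c i * (Vᴴ * M * V) i i := by
  rw [trace_conj_mul, trace_diagonal_mul]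

private lemma diagonal_one_sub {d : ℕ} (c : Fin d → ℂ) :
    Matrix.diagonal (fun i => 1 - c i) = 1 - Matrix.diagonal c := by
  rw [← Matrix.diagonal_one, ← Matrix.diagonal_sub]

private lemma one_sub_conj {d : ℕ} {V : Matrix (Fin d) (Fin d) ℂ} (hV : V * Vᴴ = 1)
    (c : Fin d → ℂ) :
    1 - V * Matrix.diagonal c * Vᴴ = V * Matrix.diagonal (fun i => 1 - c i) * Vᴴ := by
  rw [diagonal_one_sub, Matrix.mul_sub, Matrix.mul_one, Matrix.sub_mul, hV]

private lemma conj_psd {d : ℕ} (V : Matrix (Fin d) (Fin d) ℂ) {c : Fin d → ℝ}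
    (hc : ∀ i, 0 ≤ c i) :
    (V * Matrix.diagonal (fun i => (c i : ℂ)) * Vᴴ).PosSemidef :=
  (Matrix.posSemidef_diagonal_iff.mpr
    (fun i => Complex.zero_le_real.mpr (hc i))).mul_mul_conjTranspose_same V

end Aux

/-- faithfulness of the smoothed min-relative entropy (extended to
Hermitian trace-one second arguments). -/
theorem stmt_4 {d : ℕ} (ε : ℝ) (hε : ε ∈ Set.Ioo (0:ℝ) 1)
    (ρ X : Matrix (Fin d) (Fin d) ℂ)
    (hρ : IsDensityMatrix ρ) (hX : X.IsHermitian) (hXtr : X.trace = 1) :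
    sInf {r : ℝ | ∃ E : Matrix (Fin d) (Fin d) ℂ, IsTest E ∧
        ((1 - E) * ρ).trace.re ≤ ε ∧ r = (E * X).trace.re} = 1 - ε ↔
      ρ = X := by
  classical
  have trace_eq_sum : ∀ (M : Matrix (Fin d) (Fin d) ℂ), M.trace = ∑ i, M i i := fun M => rfl
  constructor
  · -- forward direction
    intro h
    by_contra hne
    have hD : (ρ - X).IsHermitian := hρ.1.1.sub hX
    have hDtr : (ρ - X).trace = 0 := by rw [Matrix.trace_sub, hρ.2, hXtr, sub_self]
    have hDne : ρ - X ≠ 0 := sub_ne_zero.mpr hne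
    set V : Matrix (Fin d) (Fin d) ℂ := (hD.eigenvectorUnitary : Matrix (Fin d) (Fin d) ℂ)
      with hVdef
    set lam : Fin d → ℝ := hD.eigenvalues with hlamdef
    have hV1 : V * Vᴴ = 1 := by
      have := Matrix.mem_unitaryGroup_iff.mp hD.eigenvectorUnitary.2
      rwa [Matrix.star_eq_conjTranspose] at this
    have hdiag : Vᴴ * (ρ - X) * V = Matrix.diagonal (fun i => ((lam i : ℝ) : ℂ)) := by
      have := hD.conjStarAlgAut_star_eigenvectorUnitary
      rw [Unitary.conjStarAlgAut_star_apply] at this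
      rw [Matrix.star_eq_conjTranspose] at this
      rw [this]
      rfl
    have htr2 : ∑ i, ((lam i : ℝ) : ℂ) = 0 := by
      have h1 : (Vᴴ * (ρ - X) * V).trace = (ρ - X).trace := by
        rw [Matrix.trace_mul_cycle, hV1, Matrix.one_mul]
      rw [hdiag, Matrix.trace_diagonal, hDtr] at h1
      exact h1
    have hsum : ∑ i, lam i = 0 := by exact_mod_cast htr2
    have hex : ∃ i, 0 < lam i := by
      by_contra hcon
      push_neg at hcon
      have hz := (Finset.sum_eq_zero_iff_of_nonpos (fun i _ => hcon i)).mp hsum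
      apply hDne
      have hdz : Matrix.diagonal (fun i => ((lam i : ℝ) : ℂ)) = 0 := by
        have : (fun i => ((lam i : ℝ) : ℂ)) = fun _ => (0 : ℂ) := by
          funext i; rw [hz i (Finset.mem_univ i)]; simp
        rw [this, Matrix.diagonal_zero]
      calc ρ - X = (V * Vᴴ) * (ρ - X) * (V * Vᴴ) := by rw [hV1, Matrix.one_mul, Matrix.mul_one]
        _ = V * (Vᴴ * (ρ - X) * V) * Vᴴ := by simp only [Matrix.mul_assoc]
        _ = 0 := by rw [hdiag, hdz, Matrix.mul_zero, Matrix.zero_mul]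
    obtain ⟨i₀, hi₀⟩ := hex
    set g : Fin d → ℝ := fun i => if 0 < lam i then 1 else 0 with hgdef
    have hg01 : ∀ i, 0 ≤ g i ∧ g i ≤ 1 := fun i => by
      by_cases hi : 0 < lam i <;> simp [hgdef, hi]
    set t : ℝ := ∑ i, g i * lam i with htdef
    have htpos : 0 < t := by
      refine Finset.sum_pos' (fun i _ => ?_) ⟨i₀, Finset.mem_univ i₀, ?_⟩
      · by_cases hi : 0 < lam i
        · simp only [hgdef, hi, if_true, one_mul]; exact hi.le
        · simp [hgdef, hi]
      · simp [hgdef, hi₀]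
    set R : Matrix (Fin d) (Fin d) ℂ := Vᴴ * ρ * V with hRdef
    have hRpsd : R.PosSemidef := hρ.1.conjTranspose_mul_mul_same V
    set P : Fin d → ℝ := fun i => (R i i).re with hPdef
    have hPnn : ∀ i, 0 ≤ P i := fun i => by
      have := (Complex.le_def.mp (psd_diag_entry hRpsd i)).1
      simpa [hPdef] using this
    have hPsum : ∑ i, P i = 1 := by
      have h1 : R.trace = 1 := by
        rw [hRdef, Matrix.trace_mul_cycle, hV1, Matrix.one_mul, hρ.2]
      calc ∑ i, P i = (∑ i, R i i).re := (Complex.re_sum _ _).symm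
        _ = R.trace.re := by rw [← trace_eq_sum]
        _ = 1 := by rw [h1]; simp
    set q : ℝ := ∑ i, g i * P i with hqdef
    have hq0 : 0 ≤ q := Finset.sum_nonneg fun i _ => mul_nonneg (hg01 i).1 (hPnn i)
    have hq1 : q ≤ 1 := by
      rw [hqdef, ← hPsum]
      exact Finset.sum_le_sum fun i _ => mul_le_of_le_one_left (hPnn i) (hg01 i).2
    set δ : ℝ := ε * (1 - ε) with hδdef
    have hδ0 : 0 < δ := mul_pos hε.1 (by linarith [hε.2])
    have hδε : δ ≤ ε := by nlinarith [hε.1, hε.2]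
    have hδ1 : δ ≤ 1 - ε := by nlinarith [hε.1, hε.2]
    set a : ℝ := 1 - ε - δ * q with hadef
    have hδq : δ * q ≤ δ := mul_le_of_le_one_right hδ0.le hq1
    have ha0 : 0 ≤ a := by rw [hadef]; linarith
    have ha1 : a + δ ≤ 1 := by
      have := mul_nonneg hδ0.le hq0
      rw [hadef]; linarith
    set c : Fin d → ℝ := fun i => a + δ * g i with hcdef
    have hc0 : ∀ i, 0 ≤ c i := fun i =>
      add_nonneg ha0 (mul_nonneg hδ0.le (hg01 i).1)
    have hc1 : ∀ i, c i ≤ 1 := fun i => by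
      have h1 : δ * g i ≤ δ := mul_le_of_le_one_right hδ0.le (hg01 i).2
      simp only [hcdef]; linarith
    set E : Matrix (Fin d) (Fin d) ℂ := V * Matrix.diagonal (fun i => ((c i : ℝ) : ℂ)) * Vᴴ
      with hEdef
    have hEtest : IsTest E := by
      refine ⟨conj_psd V hc0, ?_⟩
      rw [hEdef, one_sub_conj hV1]
      have hfun : (fun i => 1 - ((c i : ℝ) : ℂ)) = fun i => (((1 - c i : ℝ)) : ℂ) := by
        funext i; push_cast; ring
      rw [hfun]
      exact conj_psd V (fun i => by linarith [hc1 i])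
    have hEρ : (E * ρ).trace.re = ∑ i, c i * P i := by
      rw [hEdef, conj_diag_trace, Complex.re_sum]
      refine Finset.sum_congr rfl fun i _ => ?_
      rw [show Vᴴ * ρ * V = R from hRdef.symm, Complex.re_ofReal_mul]
    have hsum1 : ∑ i, c i * P i = 1 - ε := by
      have hterm : ∀ i, c i * P i = a * P i + δ * (g i * P i) := fun i => by
        simp only [hcdef]; ring
      rw [Finset.sum_congr rfl fun i _ => hterm i, Finset.sum_add_distrib,
        ← Finset.mul_sum, ← Finset.mul_sum, hPsum, mul_one, ← hqdef, hadef]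
      ring
    have hcon : ((1 - E) * ρ).trace.re ≤ ε := by
      have h2 : ((1 - E) * ρ).trace = ρ.trace - (E * ρ).trace := by
        rw [Matrix.sub_mul, Matrix.one_mul, Matrix.trace_sub]
      rw [h2, Complex.sub_re, hρ.2, Complex.one_re, hEρ, hsum1]
      linarith
    have hXV : Vᴴ * X * V = R - Matrix.diagonal (fun i => ((lam i : ℝ) : ℂ)) := by
      rw [← hdiag, hRdef, Matrix.mul_sub, Matrix.sub_mul]
      abel
    have hEX : (E * X).trace.re = (1 - ε) - δ * t := by
      rw [hEdef, conj_diag_trace, Complex.re_sum]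
      have hentry : ∀ i, (((c i : ℝ) : ℂ) * (Vᴴ * X * V) i i).re = c i * (P i - lam i) := by
        intro i
        rw [hXV, Complex.re_ofReal_mul]
        congr 1
        simp [Matrix.sub_apply, Matrix.diagonal_apply_eq, Complex.sub_re, hPdef]
      rw [Finset.sum_congr rfl fun i _ => hentry i]
      have hterm : ∀ i, c i * (P i - lam i)
          = (c i * P i) - (a * lam i + δ * (g i * lam i)) := fun i => by
        simp only [hcdef]; ring
      rw [Finset.sum_congr rfl fun i _ => hterm i, Finset.sum_sub_distrib, hsum1,
        Finset.sum_add_distrib, ← Finset.mul_sum, ← Finset.mul_sum, hsum, mul_zero, zero_add,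
        ← htdef]
    have hlt : (1 - ε) - δ * t < 1 - ε := by nlinarith [htpos, hδ0]
    by_cases hbdd : BddBelow {r : ℝ | ∃ E : Matrix (Fin d) (Fin d) ℂ, IsTest E ∧
        ((1 - E) * ρ).trace.re ≤ ε ∧ r = (E * X).trace.re}
    · have hle := csInf_le hbdd (show (1 - ε) - δ * t ∈ {r : ℝ | ∃ E : Matrix (Fin d) (Fin d) ℂ,
        IsTest E ∧ ((1 - E) * ρ).trace.re ≤ ε ∧ r = (E * X).trace.re} from
        ⟨E, hEtest, hcon, hEX.symm⟩)
      rw [h] at hle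
      linarith
    · rw [Real.sInf_of_not_bddBelow hbdd] at h
      linarith [hε.2]
  · -- reverse direction
    intro h
    subst h
    have hlb : ∀ r ∈ {r : ℝ | ∃ E : Matrix (Fin d) (Fin d) ℂ, IsTest E ∧
        ((1 - E) * ρ).trace.re ≤ ε ∧ r = (E * ρ).trace.re}, 1 - ε ≤ r := by
      rintro r ⟨E, hE, hcon, rfl⟩
      have h2 : ((1 - E) * ρ).trace = ρ.trace - (E * ρ).trace := by
        rw [Matrix.sub_mul, Matrix.one_mul, Matrix.trace_sub]
      rw [h2, Complex.sub_re, hρ.2, Complex.one_re] at hcon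
      linarith
    have hmem : (1 - ε) ∈ {r : ℝ | ∃ E : Matrix (Fin d) (Fin d) ℂ, IsTest E ∧
        ((1 - E) * ρ).trace.re ≤ ε ∧ r = (E * ρ).trace.re} := by
      refine ⟨Matrix.diagonal (fun _ => (((1 - ε : ℝ)) : ℂ)), ⟨?_, ?_⟩, ?_, ?_⟩
      · exact Matrix.posSemidef_diagonal_iff.mpr fun i =>
          Complex.zero_le_real.mpr (by linarith [hε.2])
      · rw [← diagonal_one_sub]
        refine Matrix.posSemidef_diagonal_iff.mpr fun i => ?_
        have : (1 : ℂ) - ((1 - ε : ℝ) : ℂ) = ((ε : ℝ) : ℂ) := by push_cast; ring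
        rw [this]
        exact Complex.zero_le_real.mpr hε.1.le
      · rw [← diagonal_one_sub, trace_diagonal_mul]
        have : ∀ i : Fin d, ((1 : ℂ) - ((1 - ε : ℝ) : ℂ)) * ρ i i = ((ε : ℝ) : ℂ) * ρ i i := by
          intro i; congr 1; push_cast; ring
        rw [Finset.sum_congr rfl fun i _ => this i, ← Finset.mul_sum, ← trace_eq_sum, hρ.2,
          mul_one, Complex.ofReal_re]
      · rw [trace_diagonal_mul, ← Finset.mul_sum, ← trace_eq_sum, hρ.2, mul_one,
          Complex.ofReal_re]
    exact le_antisymm (csInf_le ⟨1 - ε, hlb⟩ hmem) (le_csInf ⟨1 - ε, hmem⟩ hlb)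
end

section
/- Let n ≥ 1 be an integer and δ > 0. Then the 2^n×2^n matrix |1⟩⟨1|^{⊗n} belongs to the affine hull of the set {π_M^{⊗n} : M ∈ [2, 2+δ]}; that is, there exist finitely many values M_0, …, M_k ∈ [2, 2+δ] and real coefficients a_0, …, a_k with Σ_i a_i = 1 such that |1⟩⟨1|^{⊗n} = Σ_i a_i · π_{M_i}^{⊗n}. -/
open Matrix ComplexOrder

/-- `|1⟩⟨1|^{⊗n}` lies in the affine hull of
`{π_M^{⊗n} : M ∈ [2, 2+δ]}`. -/
theorem stmt_14 (n : ℕ) (hn : 1 ≤ n) (δ : ℝ) (hδ : 0 < δ) :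
    ∃ (k : ℕ) (Ms : Fin (k + 1) → ℝ) (a : Fin (k + 1) → ℝ),
      (∀ i, Ms i ∈ Set.Icc (2:ℝ) (2 + δ)) ∧ (∑ i, a i) = 1 ∧
      tensPow ket1 n = ∑ i, a i • tensPow (piM (Ms i)) n := by
  have hn0 : (0:ℝ) < n := by exact_mod_cast Nat.pos_of_ne_zero (by omega)
  set Ms : Fin (n+1) → ℝ := fun i => 2 + δ * i / n with hMsdef
  have hM2 : ∀ i, (2:ℝ) ≤ Ms i := by
    intro i
    have h : (0:ℝ) ≤ δ * i / n := by positivity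
    simp only [Ms]; linarith
  have hMmem : ∀ i, Ms i ∈ Set.Icc (2:ℝ) (2+δ) := by
    intro i
    refine ⟨hM2 i, ?_⟩
    have hi : (i:ℝ) ≤ n := by exact_mod_cast Fin.is_le i
    have h : δ * i / n ≤ δ := by
      rw [div_le_iff₀ hn0]; nlinarith
    simp only [Ms]; linarith
  have hMinj : Function.Injective Ms := by
    intro i j hij
    simp only [Ms] at hij
    have h : ((i:ℕ):ℝ) = ((j:ℕ):ℝ) := by
      have h2 : δ * i / n = δ * j / n := by linarith
      field_simp at h2
      linarith
    exact Fin.ext (by exact_mod_cast h)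
  have hM0 : ∀ i, (0:ℝ) < Ms i := fun i => lt_of_lt_of_le (by norm_num) (hM2 i)
  set t : Fin (n+1) → ℝ := fun i => 1 / Ms i with htdef
  have ht_pos : ∀ i, 0 < t i := fun i => by
    simp only [t]; positivity
  have ht_le : ∀ i, t i ≤ 1/2 := fun i => by
    simp only [t]
    rw [div_le_div_iff₀ (hM0 i) (by norm_num)]
    linarith [hM2 i]
  have h1t : ∀ i, (0:ℝ) < 1 - t i := fun i => by linarith [ht_le i]
  set s : Fin (n+1) → ℝ := fun i => t i / (1 - t i) with hsdef
  have hs : ∀ i, s i = 1 / (Ms i - 1) := by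
    intro i
    have h1 : Ms i ≠ 0 := (hM0 i).ne'
    have h2 : Ms i - 1 ≠ 0 := by
      have := hM2 i; intro h; nlinarith
    simp only [s, t]
    field_simp
  have hs_inj : Function.Injective s := by
    intro i j hij
    rw [hs, hs] at hij
    have h2i : Ms i - 1 ≠ 0 := by have := hM2 i; intro h; nlinarith
    have h2j : Ms j - 1 ≠ 0 := by have := hM2 j; intro h; nlinarith
    apply hMinj
    field_simp at hij
    linarith
  set V : Matrix (Fin (n+1)) (Fin (n+1)) ℝ :=
    Matrix.of (fun w i : Fin (n+1) => t i ^ (w:ℕ) * (1 - t i) ^ (n - (w:ℕ))) with hVdef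
  have hVfact : V = (Matrix.vandermonde s)ᵀ * Matrix.diagonal (fun i => (1 - t i)^n) := by
    ext w i
    rw [Matrix.mul_diagonal, Matrix.transpose_apply, Matrix.vandermonde_apply]
    have hw : (w:ℕ) ≤ n := Fin.is_le w
    have hpow : (1 - t i)^n = (1 - t i)^(w:ℕ) * (1 - t i) ^ (n - (w:ℕ)) := by
      rw [← pow_add, Nat.add_sub_cancel' hw]
    have h1ti : (1 - t i) ≠ 0 := (h1t i).ne'
    show t i ^ (w:ℕ) * (1 - t i) ^ (n - (w:ℕ)) = s i ^ (w:ℕ) * (1 - t i) ^ n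
    rw [hsdef]
    simp only
    rw [hpow, div_pow (t i) (1 - t i) ((w:ℕ)), ← mul_assoc,
      div_mul_cancel₀ (t i ^ (w:ℕ)) (pow_ne_zero _ h1ti)]
  have hdet : IsUnit V.det := by
    rw [isUnit_iff_ne_zero, hVfact, Matrix.det_mul, Matrix.det_transpose,
      Matrix.det_vandermonde, Matrix.det_diagonal]
    apply mul_ne_zero
    · apply Finset.prod_ne_zero_iff.mpr
      intro i _
      apply Finset.prod_ne_zero_iff.mpr
      intro j hj
      have hij : i ≠ j := by
        intro h; subst h; exact absurd (Finset.mem_Ioi.mp hj) (lt_irrefl _)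
      exact sub_ne_zero.mpr fun h => hij (hs_inj h.symm)
    · exact Finset.prod_ne_zero_iff.mpr fun i _ => pow_ne_zero _ (h1t i).ne'
  set e : Fin (n+1) → ℝ := fun w => if (w:ℕ) = n then 1 else 0 with hedef
  set a : Fin (n+1) → ℝ := Matrix.mulVec V⁻¹ e with hadef
  have hVa : Matrix.mulVec V a = e := by
    rw [hadef, Matrix.mulVec_mulVec, Matrix.mul_nonsing_inv _ hdet, Matrix.one_mulVec]
  have hkey : ∀ c : ℕ, c ≤ n →
      ∑ i, a i * (t i ^ c * (1 - t i)^(n-c)) = if c = n then 1 else 0 := by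
    intro c hc
    have h := congrFun hVa ⟨c, Nat.lt_succ_of_le hc⟩
    simp only [Matrix.mulVec, dotProduct, V, Matrix.of_apply, e] at h
    rw [← h]
    exact Finset.sum_congr rfl fun i _ => mul_comm _ _
  have hbin : ∀ i, ∑ w : Fin (n+1),
      (n.choose (w:ℕ) : ℝ) * (t i ^ (w:ℕ) * (1 - t i)^(n - (w:ℕ))) = 1 := by
    intro i
    rw [Fin.sum_univ_eq_sum_range (fun m => (n.choose m:ℝ) * (t i ^ m * (1 - t i)^(n-m)))]
    have h := add_pow (t i) (1 - t i) n
    have h1 : t i + (1 - t i) = 1 := by ring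
    rw [h1, one_pow] at h
    rw [show ∑ m ∈ Finset.range (n+1), (n.choose m:ℝ) * (t i ^ m * (1 - t i)^(n-m))
        = ∑ m ∈ Finset.range (n+1), t i ^ m * (1 - t i)^(n-m) * (n.choose m:ℝ) from
      Finset.sum_congr rfl fun m _ => by ring]
    exact h.symm
  have hsuma : ∑ i, a i = 1 := by
    have h1 : ∑ w : Fin (n+1), (n.choose (w:ℕ):ℝ) * e w = 1 := by
      rw [Finset.sum_eq_single (Fin.last n)]
      · simp [e, Fin.val_last]
      · intro b _ hb
        have hbn : (b:ℕ) ≠ n := fun h => hb (Fin.ext (by simp [h, Fin.val_last]))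
        simp [e, hbn]
      · simp
    calc ∑ i, a i
        = ∑ i, a i * (∑ w : Fin (n+1),
            (n.choose (w:ℕ):ℝ) * (t i ^ (w:ℕ) * (1 - t i)^(n - (w:ℕ)))) := by
          refine Finset.sum_congr rfl fun i _ => ?_
          rw [hbin i, mul_one]
      _ = ∑ i, ∑ w : Fin (n+1),
            (n.choose (w:ℕ):ℝ) * (V w i * a i) := by
          refine Finset.sum_congr rfl fun i _ => ?_
          rw [Finset.mul_sum]
          refine Finset.sum_congr rfl fun w _ => ?_
          simp only [V, Matrix.of_apply]
          ring
      _ = ∑ w : Fin (n+1), ∑ i, (n.choose (w:ℕ):ℝ) * (V w i * a i) := Finset.sum_comm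
      _ = ∑ w : Fin (n+1), (n.choose (w:ℕ):ℝ) * Matrix.mulVec V a w := by
          refine Finset.sum_congr rfl fun w _ => ?_
          rw [Matrix.mulVec, dotProduct, Finset.mul_sum]
      _ = 1 := by rw [hVa]; exact h1
  refine ⟨n, Ms, a, hMmem, hsuma, ?_⟩
  funext x y
  rw [Matrix.sum_apply]
  by_cases hxy : x = y
  · subst hxy
    set c : ℕ := (Finset.univ.filter fun j => x j = 1).card with hcdef
    have hcle : c ≤ n := by
      have h := Finset.card_filter_le Finset.univ (fun j => x j = 1)
      simpa using h
    have hket : ∀ v : Fin 2, ket1 v v = if v = 1 then 1 else 0 := by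
      intro v; fin_cases v <;> simp [ket1]
    have hpim : ∀ i, ∀ v : Fin 2,
        piM (Ms i) v v = if v = 1 then ((t i : ℝ) : ℂ) else ((1 - t i : ℝ) : ℂ) := by
      intro i v
      fin_cases v <;> simp [piM, t]
    have hL : tensPow ket1 n x x = if ∀ j, x j = 1 then 1 else 0 := by
      rw [tensPow]
      rw [show (∏ j, ket1 (x j) (x j)) = ∏ j, if x j = 1 then (1:ℂ) else 0 from
        Finset.prod_congr rfl fun j _ => hket (x j)]
      rw [Finset.prod_boole]
      simp
    have hR : ∀ i, tensPow (piM (Ms i)) n x x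
        = ((t i : ℝ) : ℂ)^c * (((1 - t i : ℝ) : ℂ))^(n - c) := by
      intro i
      rw [tensPow]
      rw [show (∏ j, piM (Ms i) (x j) (x j))
          = ∏ j, if x j = 1 then ((t i : ℝ) : ℂ) else ((1 - t i : ℝ) : ℂ) from
        Finset.prod_congr rfl fun j _ => hpim i (x j)]
      rw [Finset.prod_ite, Finset.prod_const, Finset.prod_const]
      have hcard : (Finset.univ.filter fun j => ¬ x j = 1).card = n - c := by
        have h := Finset.card_filter_add_card_filter_not
          (s := (Finset.univ : Finset (Fin n))) (p := fun j => x j = 1)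
        simp only [Finset.card_univ, Fintype.card_fin] at h
        omega
      rw [hcard]
    have hkeyC : ∑ i, (a i : ℂ) * (((t i : ℝ) : ℂ)^c * (((1 - t i : ℝ) : ℂ))^(n - c))
        = if c = n then 1 else 0 := by
      have h := hkey c hcle
      have h2 : ((∑ i, a i * (t i ^ c * (1 - t i)^(n-c)) : ℝ) : ℂ)
          = if c = n then 1 else 0 := by
        rw [h]; split <;> simp
      rw [← h2, Complex.ofReal_sum]
      refine Finset.sum_congr rfl fun i _ => ?_
      push_cast
      ring
    rw [hL]
    rw [show ∑ i, (a i • tensPow (piM (Ms i)) n) x x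
        = ∑ i, (a i : ℂ) * (((t i : ℝ) : ℂ)^c * (((1 - t i : ℝ) : ℂ))^(n - c)) from
      Finset.sum_congr rfl fun i _ => by
        rw [Matrix.smul_apply, hR i, Complex.real_smul]]
    rw [hkeyC]
    congr 1
    have hiff : (∀ j, x j = 1) ↔ c = n := by
      constructor
      · intro h
        have hu : (Finset.univ.filter fun j => x j = 1) = Finset.univ :=
          Finset.filter_eq_self.mpr fun j _ => h j
        rw [hcdef, hu, Finset.card_univ, Fintype.card_fin]
      · intro h j
        have hu : (Finset.univ.filter fun j => x j = 1) = Finset.univ := by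
          apply Finset.eq_univ_of_card
          rw [← hcdef, h, Fintype.card_fin]
        have hj2 : j ∈ Finset.univ.filter fun j => x j = 1 := by
          rw [hu]; exact Finset.mem_univ j
        exact (Finset.mem_filter.mp hj2).2
    simp only [eq_iff_iff]
    exact hiff
  · obtain ⟨j, hj⟩ : ∃ j, x j ≠ y j := Function.ne_iff.mp hxy
    have hL : tensPow ket1 n x y = 0 := by
      rw [tensPow]
      exact Finset.prod_eq_zero (Finset.mem_univ j)
        (by rw [ket1]; exact Matrix.diagonal_apply_ne _ hj)
    have hR : ∀ i, tensPow (piM (Ms i)) n x y = 0 := by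
      intro i
      rw [tensPow]
      exact Finset.prod_eq_zero (Finset.mem_univ j)
        (by rw [piM]; exact Matrix.diagonal_apply_ne _ hj)
    rw [hL]
    rw [show ∑ i, (a i • tensPow (piM (Ms i)) n) x y = ∑ i, (0:ℂ) from
      Finset.sum_congr rfl fun i _ => by rw [Matrix.smul_apply, hR i, smul_zero]]
    simp
end
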